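/- Let A be a positively graded commutative ring whose irrelevant ideal A_+ is finitely generated (equivalently, A is finitely generated as an A_0-algebra). Then the topological space Proj A is quasi-compact. -/
import Mathlib

open ProjectiveSpectrum

/-- If the irrelevant ideal is contained in the radical of an ideal `J`, then the zero locus
of `J` in `Proj` is empty. -/
lemma zeroLocus_empty_of_irrelevant_le_radical {R A : Type*} [CommSemiring R] [CommRing A]
    [Algebra R A] (𝒜 : ℕ → Submodule R A) [GradedAlgebra 𝒜] (J : Ideal A)
    (h : (HomogeneousIdeal.irrelevant 𝒜).toIdeal ≤ J.radical) :
    ProjectiveSpectrum.zeroLocus 𝒜 (J : Set A) = ∅ := by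
  ext x
  simp only [Set.mem_empty_iff_false, iff_false, ProjectiveSpectrum.mem_zeroLocus,
    SetLike.coe_subset_coe]
  intro hle
  exact x.not_irrelevant_le fun a ha =>
    x.isPrime.radical_le_iff.mpr hle (h ha)

/-- If the zero locus of a homogeneous ideal `J` in `Proj` is empty, then the irrelevant ideal
is contained in the radical of `J`. -/
lemma irrelevant_le_radical_of_zeroLocus_empty {R A : Type*} [CommSemiring R] [CommRing A]
    [Algebra R A] (𝒜 : ℕ → Submodule R A) [GradedAlgebra 𝒜] (J : HomogeneousIdeal 𝒜)
    (h : ProjectiveSpectrum.zeroLocus 𝒜 (J : Set A) = ∅) :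
    (HomogeneousIdeal.irrelevant 𝒜).toIdeal ≤ J.toIdeal.radical := by
  intro a ha
  rw [J.isHomogeneous.radical_eq, Ideal.mem_sInf]
  rintro P ⟨hP1, hP2, hP3⟩
  by_cases hirr : (HomogeneousIdeal.irrelevant 𝒜).toIdeal ≤ P
  · exact hirr ha
  · exact absurd (h ▸ (ProjectiveSpectrum.mem_zeroLocus 𝒜 _ _).mpr hP2 :
      (⟨⟨P, hP1⟩, hP3, hirr⟩ : ProjectiveSpectrum 𝒜) ∈ (∅ : Set (ProjectiveSpectrum 𝒜)))
      (Set.notMem_empty _)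

/-- Let `A` be a positively graded commutative ring whose irrelevant ideal `A₊` is finitely
generated. Then `Proj A` is quasi-compact. -/
theorem projectiveSpectrum_compactSpace {R A : Type*} [CommSemiring R] [CommRing A]
    [Algebra R A] (𝒜 : ℕ → Submodule R A) [GradedAlgebra 𝒜]
    (hfg : (HomogeneousIdeal.irrelevant 𝒜).toIdeal.FG) :
    CompactSpace (ProjectiveSpectrum 𝒜) := by
  classical
  obtain ⟨S, hS⟩ := hfg
  rw [← isCompact_univ_iff]
  apply isCompact_of_finite_subfamily_closed
  intro ι Z hZc hZ
  -- replace each closed set by the zero locus of a homogeneous ideal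
  choose s hs using fun i => (isClosed_iff_zeroLocus 𝒜 (Z i)).mp (hZc i)
  set J : ι → HomogeneousIdeal 𝒜 := fun i => (Ideal.span (s i)).homogeneousHull 𝒜 with hJ
  have hZJ : ∀ i, Z i = ProjectiveSpectrum.zeroLocus 𝒜 ((J i) : Set A) := by
    intro i
    rw [hs i]
    ext x
    simp only [ProjectiveSpectrum.mem_zeroLocus, SetLike.coe_subset_coe]
    constructor
    · intro h
      exact (Ideal.homogeneousHull.gc 𝒜 _ _).mpr (Ideal.span_le.mpr h)
    · intro h y hy
      exact ((Ideal.homogeneousHull.gc 𝒜 _ _).mp h) (Ideal.subset_span hy)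
  -- the intersection of all the Z i is empty
  have hempty : ProjectiveSpectrum.zeroLocus 𝒜 ((⨆ i, J i : HomogeneousIdeal 𝒜) : Set A) = ∅ := by
    rw [ProjectiveSpectrum.zeroLocus_iSup_homogeneousIdeal]
    rw [Set.univ_inter] at hZ
    rw [← hZ]
    exact Set.iInter_congr fun i => (hZJ i).symm
  have hrad := irrelevant_le_radical_of_zeroLocus_empty 𝒜 _ hempty
  -- each generator has a power in the supremum, supported on a finite set of indices
  have key : ∀ f ∈ S, ∃ (t : Finset ι), f ∈ (⨆ i ∈ t, J i : HomogeneousIdeal 𝒜).toIdeal.radical := by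
    intro f hf
    have : f ∈ (⨆ i, J i : HomogeneousIdeal 𝒜).toIdeal.radical := by
      apply hrad
      rw [← hS]
      exact Ideal.subset_span hf
    obtain ⟨n, hn⟩ := this
    rw [HomogeneousIdeal.toIdeal_iSup] at hn
    obtain ⟨t, ht⟩ := Submodule.mem_iSup_iff_exists_finset.mp hn
    refine ⟨t, ⟨n, ?_⟩⟩
    rw [HomogeneousIdeal.toIdeal_iSup₂]
    exact ht
  choose t ht using key
  refine ⟨S.attach.biUnion (fun f => t f.1 f.2), ?_⟩
  rw [Set.univ_inter]
  have : (HomogeneousIdeal.irrelevant 𝒜).toIdeal ≤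
      ((⨆ i ∈ S.attach.biUnion (fun f => t f.1 f.2), J i : HomogeneousIdeal 𝒜)).toIdeal.radical := by
    rw [← hS, Ideal.span_le]
    intro f hf
    refine Ideal.radical_mono ((Ideal.homogeneousHull.gc 𝒜).monotone_u
      (iSup_le_iSup_of_subset fun i hi =>
        Finset.mem_biUnion.mpr ⟨⟨f, hf⟩, S.mem_attach _, hi⟩)) (ht f hf)
  have h2 := zeroLocus_empty_of_irrelevant_le_radical 𝒜 _ this
  simp_rw [hZJ, ← ProjectiveSpectrum.zeroLocus_iSup_homogeneousIdeal]
  exact h2
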